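/- Let r, j ≥ 1, let γ : [0,1] → ℂ be a continuously differentiable curve, and let W : ℂ → M_r(ℂ) be continuous on the image of γ. Then the following four conditions are equivalent: (i) there exists a unique monic r×r matrix polynomial P of degree j such that ∫_γ P(z) W(z) z^ℓ dz = 0_r for ℓ = 0,…,j−1; (ii) there exists a unique monic r×r matrix polynomial P of degree j such that ∫_γ z^ℓ W(z) P(z) dz = 0_r for ℓ = 0,…,j−1; (iii) there exists a unique r×r matrix polynomial Q of degree ≤ j−1 such that ∫_γ Q(z) W(z) z^ℓ dz = δ_{ℓ,j−1}·I_r for ℓ = 0,…,j−1; (iv) there exists a unique r×r matrix polynomial Q of degree ≤ j−1 such that ∫_γ z^ℓ W(z) Q(z) dz = δ_{ℓ,j−1}·I_r for ℓ = 0,…,j−1. -/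

import Mathlib

/-- An `m × n` matrix polynomial of degree at most `d`:
`P z = ∑_{ℓ=0}^{d} z ^ ℓ • C ℓ` for some constant matrices `C ℓ`. -/
def IsMatPoly (m n d : ℕ) (P : ℂ → Matrix (Fin m) (Fin n) ℂ) : Prop :=
  ∃ C : ℕ → Matrix (Fin m) (Fin n) ℂ,
    ∀ z : ℂ, P z = ∑ ℓ ∈ Finset.range (d + 1), z ^ ℓ • C ℓ

/-- A monic `r × r` matrix polynomial of degree `d`: the coefficient of `z ^ d` is `I_r`. -/
def IsMonicMatPoly (r d : ℕ) (P : ℂ → Matrix (Fin r) (Fin r) ℂ) : Prop :=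
  ∃ C : ℕ → Matrix (Fin r) (Fin r) ℂ, C d = 1 ∧
    ∀ z : ℂ, P z = ∑ ℓ ∈ Finset.range (d + 1), z ^ ℓ • C ℓ

/-- Entrywise contour integral of a matrix-valued function along `γ : [0,1] → ℂ`. -/
noncomputable def contourIntegralM {m n : ℕ} (γ : ℝ → ℂ) (F : ℂ → Matrix (Fin m) (Fin n) ℂ) :
    Matrix (Fin m) (Fin n) ℂ :=
  Matrix.of fun i j => ∫ t in (0:ℝ)..1, deriv γ t * F (γ t) i j

open MeasureTheory Finset

namespace Stmt7Aux



lemma poly_coeff_eq_zero {m : ℕ} {a : ℕ → ℂ}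
    (h : ∀ z : ℂ, ∑ k ∈ Finset.range m, z ^ k * a k = 0) :
    ∀ k < m, a k = 0 := by
  intro k hk
  set p : Polynomial ℂ := ∑ k ∈ Finset.range m, Polynomial.C (a k) * Polynomial.X ^ k with hp
  have hp0 : p = 0 := by
    apply Polynomial.funext
    intro z
    rw [hp]
    simp only [Polynomial.eval_finset_sum, Polynomial.eval_mul, Polynomial.eval_C,
      Polynomial.eval_pow, Polynomial.eval_X, Polynomial.eval_zero]
    rw [← h z]
    exact Finset.sum_congr rfl fun k _ => mul_comm _ _
  have h2 : p.coeff k = a k := by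
    rw [hp]
    simp only [Polynomial.finset_sum_coeff, Polynomial.coeff_C_mul, Polynomial.coeff_X_pow]
    rw [Finset.sum_eq_single k]
    · simp
    · intro b _ hb
      simp [Ne.symm hb]
    · intro hkk
      exact absurd (Finset.mem_range.mpr hk) hkk
  rw [← h2, hp0, Polynomial.coeff_zero]

lemma mat_coeff_unique {r d : ℕ} {C C' : ℕ → Matrix (Fin r) (Fin r) ℂ}
    (h : ∀ z : ℂ, ∑ k ∈ Finset.range (d+1), z ^ k • C k
        = ∑ k ∈ Finset.range (d+1), z ^ k • C' k) :
    ∀ k < d + 1, C k = C' k := by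
  intro k hk
  ext i i'
  have key : ∀ z : ℂ, ∑ k ∈ Finset.range (d+1), z ^ k * (C k i i' - C' k i i') = 0 := by
    intro z
    have hz : (∑ k ∈ Finset.range (d+1), z ^ k • C k) i i'
        = (∑ k ∈ Finset.range (d+1), z ^ k • C' k) i i' := by rw [h z]
    simp only [Matrix.sum_apply, Matrix.smul_apply, smul_eq_mul] at hz
    simp only [mul_sub, Finset.sum_sub_distrib, hz, sub_self]
  exact sub_eq_zero.mp (poly_coeff_eq_zero key k hk)

lemma exU_left {r : ℕ} (hr : 1 ≤ r) {ι : Type} [Fintype ι] [DecidableEq ι]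
    (H : Matrix ι ι ℂ) (B : Matrix (Fin r) ι ℂ) :
    (∃! X : Matrix (Fin r) ι ℂ, X * H = B) ↔ IsUnit H := by
  constructor
  · rintro ⟨X, hX, hu⟩
    by_contra hH
    have hdet : H.det = 0 := by
      by_contra h0
      exact hH ((Matrix.isUnit_iff_isUnit_det H).mpr (isUnit_iff_ne_zero.mpr h0))
    obtain ⟨v, hv0, hv⟩ := Matrix.exists_vecMul_eq_zero_iff.mpr hdet
    have hker : Matrix.of (fun (_ : Fin r) c => v c) * H = 0 := by
      ext i d
      simpa [Matrix.mul_apply, Matrix.vecMul, dotProduct] using congrFun hv d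
    have hX' : (X + Matrix.of (fun _ c => v c)) * H = B := by
      rw [Matrix.add_mul, hker, add_zero, hX]
    have hEq := hu _ hX'
    have hz : Matrix.of (fun (_ : Fin r) c => v c) = (0 : Matrix (Fin r) ι ℂ) := by
      have h3 : X + Matrix.of (fun _ c => v c) = X + 0 := by rw [hEq, add_zero]
      exact add_left_cancel h3
    exact hv0 (funext fun c => congrFun (congrFun hz ⟨0, hr⟩) c)
  · intro hH
    have hd := (Matrix.isUnit_iff_isUnit_det H).mp hH
    refine ⟨B * H⁻¹, ?_, ?_⟩
    · show B * H⁻¹ * H = B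
      rw [Matrix.mul_assoc, Matrix.nonsing_inv_mul H hd, Matrix.mul_one]
    · intro X hX
      have h2 : X * H * H⁻¹ = B * H⁻¹ := by rw [hX]
      rwa [Matrix.mul_assoc, Matrix.mul_nonsing_inv H hd, Matrix.mul_one] at h2

lemma exU_right {r : ℕ} (hr : 1 ≤ r) {ι : Type} [Fintype ι] [DecidableEq ι]
    (H : Matrix ι ι ℂ) (B : Matrix ι (Fin r) ℂ) :
    (∃! Y : Matrix ι (Fin r) ℂ, H * Y = B) ↔ IsUnit H := by
  constructor
  · rintro ⟨Y, hY, hu⟩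
    by_contra hH
    have hdet : H.det = 0 := by
      by_contra h0
      exact hH ((Matrix.isUnit_iff_isUnit_det H).mpr (isUnit_iff_ne_zero.mpr h0))
    obtain ⟨v, hv0, hv⟩ := Matrix.exists_mulVec_eq_zero_iff.mpr hdet
    have hker : H * Matrix.of (fun a (_ : Fin r) => v a) = 0 := by
      ext i d
      simpa [Matrix.mul_apply, Matrix.mulVec, dotProduct] using congrFun hv i
    have hY' : H * (Y + Matrix.of (fun a _ => v a)) = B := by
      rw [Matrix.mul_add, hker, add_zero, hY]
    have hEq := hu _ hY'
    have hz : Matrix.of (fun a (_ : Fin r) => v a) = (0 : Matrix ι (Fin r) ℂ) := by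
      have h3 : Y + Matrix.of (fun a _ => v a) = Y + 0 := by rw [hEq, add_zero]
      exact add_left_cancel h3
    exact hv0 (funext fun c => congrFun (congrFun hz c) ⟨0, hr⟩)
  · intro hH
    have hd := (Matrix.isUnit_iff_isUnit_det H).mp hH
    refine ⟨H⁻¹ * B, ?_, ?_⟩
    · show H * (H⁻¹ * B) = B
      rw [← Matrix.mul_assoc, Matrix.mul_nonsing_inv H hd, Matrix.one_mul]
    · intro Y hY
      have h2 : H⁻¹ * (H * Y) = H⁻¹ * B := by rw [hY]
      rwa [← Matrix.mul_assoc, Matrix.nonsing_inv_mul H hd, Matrix.one_mul] at h2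



variable {r : ℕ} {γ : ℝ → ℂ} {W : ℂ → Matrix (Fin r) (Fin r) ℂ}

lemma key_int (hγ : ContDiffOn ℝ 1 γ (Set.Icc 0 1)) (f : ℂ → ℂ)
    (hf : ContinuousOn f (γ '' Set.Icc 0 1)) :
    IntervalIntegrable (fun t => deriv γ t * f (γ t)) volume 0 1 := by
  have hg : ContinuousOn (fun t => derivWithin γ (Set.Icc 0 1) t * f (γ t)) (Set.Icc 0 1) :=
    (hγ.continuousOn_derivWithin (uniqueDiffOn_Icc one_pos) le_rfl).mul
      (hf.comp hγ.continuousOn (Set.mapsTo_image γ _))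
  have huIcc : Set.uIcc (0:ℝ) 1 = Set.Icc 0 1 := Set.uIcc_of_le (by norm_num)
  have hInt : IntervalIntegrable (fun t => derivWithin γ (Set.Icc 0 1) t * f (γ t)) volume 0 1 :=
    ContinuousOn.intervalIntegrable (by rw [huIcc]; exact hg)
  rw [intervalIntegrable_iff_integrableOn_Ioc_of_le (by norm_num : (0:ℝ) ≤ 1)] at hInt ⊢
  refine hInt.congr_fun_ae ?_
  have hres : volume.restrict (Set.Ioc (0:ℝ) 1) = volume.restrict (Set.Ioo 0 1) :=
    (Measure.restrict_congr_set Ioo_ae_eq_Ioc).symm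
  have hmem : ∀ᵐ t ∂(volume.restrict (Set.Ioc (0:ℝ) 1)), t ∈ Set.Ioo (0:ℝ) 1 := by
    rw [hres]; exact ae_restrict_mem measurableSet_Ioo
  refine hmem.mono fun t ht => ?_
  have : derivWithin γ (Set.Icc 0 1) t = deriv γ t :=
    derivWithin_of_mem_nhds (Icc_mem_nhds ht.1 ht.2)
  simp [this]

lemma entry_cont (hγ : ContDiffOn ℝ 1 γ (Set.Icc 0 1))
    (hW : ContinuousOn W (γ '' Set.Icc 0 1)) (p q : Fin r) (m : ℕ) :
    IntervalIntegrable (fun t => deriv γ t * ((γ t) ^ m * W (γ t) p q)) volume 0 1 :=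
  key_int hγ (fun z => z ^ m * W z p q)
    (((continuous_pow m).continuousOn).mul
      ((continuous_apply q).comp_continuousOn ((continuous_apply p).comp_continuousOn hW)))

lemma intL (hγ : ContDiffOn ℝ 1 γ (Set.Icc 0 1))
    (hW : ContinuousOn W (γ '' Set.Icc 0 1))
    (C : ℕ → Matrix (Fin r) (Fin r) ℂ) (d ℓ : ℕ) :
    contourIntegralM γ (fun z => z ^ ℓ • ((∑ k ∈ Finset.range (d+1), z ^ k • C k) * W z))
      = ∑ k ∈ Finset.range (d+1), C k * contourIntegralM γ (fun z => z ^ (ℓ + k) • W z) := by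
  ext i i'
  simp only [contourIntegralM, Matrix.of_apply]
  have hfun : (fun t => deriv γ t
        * ((γ t) ^ ℓ • ((∑ k ∈ Finset.range (d+1), (γ t) ^ k • C k) * W (γ t))) i i')
      = fun t => ∑ kp ∈ Finset.range (d+1) ×ˢ (Finset.univ : Finset (Fin r)),
          C kp.1 i kp.2 * (deriv γ t * ((γ t) ^ (ℓ + kp.1) * W (γ t) kp.2 i')) := by
    funext t
    rw [Finset.sum_product]
    simp only [Matrix.smul_apply, Matrix.mul_apply, Matrix.sum_apply, smul_eq_mul,
      Finset.sum_mul, Finset.mul_sum, pow_add]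
    refine Finset.sum_congr rfl fun k _ => Finset.sum_congr rfl fun p _ => ?_
    ring
  rw [hfun, intervalIntegral.integral_finset_sum]
  · rw [Finset.sum_product]
    simp only [Matrix.sum_apply, Matrix.mul_apply, contourIntegralM, Matrix.of_apply,
      Matrix.smul_apply, smul_eq_mul]
    refine Finset.sum_congr rfl fun k _ => Finset.sum_congr rfl fun p _ => ?_
    rw [intervalIntegral.integral_const_mul]
  · intro kp _
    exact (entry_cont hγ hW kp.2 i' (ℓ + kp.1)).const_mul _

lemma intR (hγ : ContDiffOn ℝ 1 γ (Set.Icc 0 1))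
    (hW : ContinuousOn W (γ '' Set.Icc 0 1))
    (C : ℕ → Matrix (Fin r) (Fin r) ℂ) (d ℓ : ℕ) :
    contourIntegralM γ (fun z => z ^ ℓ • (W z * (∑ k ∈ Finset.range (d+1), z ^ k • C k)))
      = ∑ k ∈ Finset.range (d+1), contourIntegralM γ (fun z => z ^ (ℓ + k) • W z) * C k := by
  ext i i'
  simp only [contourIntegralM, Matrix.of_apply]
  have hfun : (fun t => deriv γ t
        * ((γ t) ^ ℓ • (W (γ t) * (∑ k ∈ Finset.range (d+1), (γ t) ^ k • C k))) i i')
      = fun t => ∑ kp ∈ Finset.range (d+1) ×ˢ (Finset.univ : Finset (Fin r)),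
          (deriv γ t * ((γ t) ^ (ℓ + kp.1) * W (γ t) i kp.2)) * C kp.1 kp.2 i' := by
    funext t
    rw [Finset.sum_product_right]
    simp only [Matrix.smul_apply, Matrix.mul_apply, Matrix.sum_apply, smul_eq_mul,
      Finset.sum_mul, Finset.mul_sum, pow_add]
    rw [Finset.sum_comm]
    apply Finset.sum_congr rfl
    intro p _
    apply Finset.sum_congr rfl
    intro k _
    ring
  rw [hfun, intervalIntegral.integral_finset_sum]
  · rw [Finset.sum_product]
    simp only [Matrix.sum_apply, Matrix.mul_apply, contourIntegralM, Matrix.of_apply,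
      Matrix.smul_apply, smul_eq_mul]
    refine Finset.sum_congr rfl fun k _ => Finset.sum_congr rfl fun p _ => ?_
    rw [intervalIntegral.integral_mul_const]
  · intro kp _
    exact (entry_cont hγ hW i kp.2 (ℓ + kp.1)).mul_const _



noncomputable def μm {r : ℕ} (γ : ℝ → ℂ) (W : ℂ → Matrix (Fin r) (Fin r) ℂ) (k : ℕ) :
    Matrix (Fin r) (Fin r) ℂ :=
  contourIntegralM γ (fun z => z ^ k • W z)

noncomputable def Hm {r : ℕ} (γ : ℝ → ℂ) (W : ℂ → Matrix (Fin r) (Fin r) ℂ) (n : ℕ) :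
    Matrix (Fin (n+1) × Fin r) (Fin (n+1) × Fin r) ℂ :=
  fun a b => μm γ W ((a.1 : ℕ) + (b.1 : ℕ)) a.2 b.2

variable {r : ℕ} {γ : ℝ → ℂ} {W : ℂ → Matrix (Fin r) (Fin r) ℂ} {n : ℕ}

lemma entryL (C : ℕ → Matrix (Fin r) (Fin r) ℂ) (i : Fin r) (b : Fin (n+1) × Fin r) :
    ((Matrix.of fun i (a : Fin (n+1) × Fin r) => C a.1 i a.2) * Hm γ W n) i b
      = (∑ k ∈ Finset.range (n+1), C k * μm γ W ((b.1 : ℕ) + k)) i b.2 := by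
  rw [Matrix.mul_apply, Fintype.sum_prod_type, Matrix.sum_apply,
    ← Fin.sum_univ_eq_sum_range (fun k => (C k * μm γ W ((b.1 : ℕ) + k)) i b.2) (n+1)]
  apply Finset.sum_congr rfl
  intro k _
  rw [Matrix.mul_apply]
  apply Finset.sum_congr rfl
  intro p _
  simp [Hm, Nat.add_comm]

lemma entryR (C : ℕ → Matrix (Fin r) (Fin r) ℂ) (b : Fin (n+1) × Fin r) (i : Fin r) :
    (Hm γ W n * (Matrix.of fun (a : Fin (n+1) × Fin r) i => C a.1 a.2 i)) b i
      = (∑ k ∈ Finset.range (n+1), μm γ W ((b.1 : ℕ) + k) * C k) b.2 i := by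
  rw [Matrix.mul_apply, Fintype.sum_prod_type, Matrix.sum_apply,
    ← Fin.sum_univ_eq_sum_range (fun k => (μm γ W ((b.1 : ℕ) + k) * C k) b.2 i) (n+1)]
  apply Finset.sum_congr rfl
  intro k _
  rw [Matrix.mul_apply]
  apply Finset.sum_congr rfl
  intro p _
  simp [Hm]

lemma corrL (C : ℕ → Matrix (Fin r) (Fin r) ℂ) (Bb : ℕ → Matrix (Fin r) (Fin r) ℂ) :
    ((Matrix.of fun i (a : Fin (n+1) × Fin r) => C a.1 i a.2) * Hm γ W n
        = Matrix.of fun i (b : Fin (n+1) × Fin r) => Bb b.1 i b.2)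
      ↔ ∀ ℓ < n + 1, ∑ k ∈ Finset.range (n+1), C k * μm γ W (ℓ + k) = Bb ℓ := by
  constructor
  · intro h ℓ hℓ
    ext i q
    have h2 := Matrix.ext_iff.mpr h i (⟨ℓ, hℓ⟩, q)
    rw [entryL] at h2
    simpa using h2
  · intro h
    ext i b
    rw [entryL]
    have h2 := h b.1 b.1.isLt
    rw [h2]
    simp

lemma corrR (C : ℕ → Matrix (Fin r) (Fin r) ℂ) (Bb : ℕ → Matrix (Fin r) (Fin r) ℂ) :
    (Hm γ W n * (Matrix.of fun (a : Fin (n+1) × Fin r) i => C a.1 a.2 i)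
        = Matrix.of fun (b : Fin (n+1) × Fin r) i => Bb b.1 b.2 i)
      ↔ ∀ ℓ < n + 1, ∑ k ∈ Finset.range (n+1), μm γ W (ℓ + k) * C k = Bb ℓ := by
  constructor
  · intro h ℓ hℓ
    ext q i
    have h2 := Matrix.ext_iff.mpr h (⟨ℓ, hℓ⟩, q) i
    rw [entryR] at h2
    simpa using h2
  · intro h
    ext b i
    rw [entryR]
    have h2 := h b.1 b.1.isLt
    rw [h2]
    simp

lemma cond_monicL (hr : 1 ≤ r) (hγ : ContDiffOn ℝ 1 γ (Set.Icc 0 1))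
    (hW : ContinuousOn W (γ '' Set.Icc 0 1)) :
    (∃! P : ℂ → Matrix (Fin r) (Fin r) ℂ, IsMonicMatPoly r (n+1) P ∧
        ∀ ℓ < n + 1, contourIntegralM γ (fun z => z ^ ℓ • (P z * W z)) = 0) ↔
    IsUnit (Hm γ W n) := by
  rw [← exU_left hr (Hm γ W n)
      (Matrix.of fun i (b : Fin (n+1) × Fin r) => (-(μm γ W ((b.1 : ℕ) + (n+1)))) i b.2)]
  have comp : ∀ (C : ℕ → Matrix (Fin r) (Fin r) ℂ), C (n+1) = 1 → ∀ ℓ : ℕ,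
      contourIntegralM γ (fun z => z ^ ℓ • ((∑ k ∈ Finset.range (n+1+1), z ^ k • C k) * W z))
        = ∑ k ∈ Finset.range (n+1), C k * μm γ W (ℓ + k) + μm γ W (ℓ + (n+1)) := by
    intro C hC ℓ
    rw [intL hγ hW C (n+1) ℓ, Finset.sum_range_succ, hC, one_mul]
    rfl
  have orth_iff : ∀ (C : ℕ → Matrix (Fin r) (Fin r) ℂ), C (n+1) = 1 →
      ∀ (P : ℂ → Matrix (Fin r) (Fin r) ℂ),
      (∀ z, P z = ∑ k ∈ Finset.range (n+1+1), z ^ k • C k) →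
      ((∀ ℓ < n + 1, contourIntegralM γ (fun z => z ^ ℓ • (P z * W z)) = 0) ↔
        (Matrix.of fun i (a : Fin (n+1) × Fin r) => C a.1 i a.2) * Hm γ W n
          = Matrix.of fun i (b : Fin (n+1) × Fin r) => (-(μm γ W ((b.1 : ℕ) + (n+1)))) i b.2) := by
    intro C hC P hP
    rw [corrL C (fun ℓ => -(μm γ W (ℓ + (n+1))))]
    refine forall₂_congr fun ℓ hℓ => ?_
    have hfun : (fun z => z ^ ℓ • (P z * W z))
        = fun z => z ^ ℓ • ((∑ k ∈ Finset.range (n+1+1), z ^ k • C k) * W z) := by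
      funext z; rw [hP z]
    rw [hfun, comp C hC ℓ, add_eq_zero_iff_eq_neg]
  constructor
  · rintro ⟨P, ⟨⟨C, hCtop, hP⟩, horth⟩, huniq⟩
    refine ⟨Matrix.of fun i (a : Fin (n+1) × Fin r) => C a.1 i a.2,
      (orth_iff C hCtop P hP).mp horth, ?_⟩
    intro X' hX'
    set C' : ℕ → Matrix (Fin r) (Fin r) ℂ :=
      fun k => if h : k < n + 1 then Matrix.of (fun i p => X' i (⟨k, h⟩, p)) else 1 with hC'
    have hC'top : C' (n+1) = 1 := by simp [hC']
    have hX'C : (Matrix.of fun i (a : Fin (n+1) × Fin r) => C' a.1 i a.2) = X' := by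
      ext i a
      simp [hC', a.1.isLt, a.1.is_le]
    have horth' : ∀ ℓ < n + 1,
        contourIntegralM γ (fun z => z ^ ℓ •
          ((∑ k ∈ Finset.range (n+1+1), z ^ k • C' k) * W z)) = 0 :=
      (orth_iff C' hC'top _ fun z => rfl).mpr (by rw [hX'C]; exact hX')
    have hPP' : (fun z => ∑ k ∈ Finset.range (n+1+1), z ^ k • C' k) = P :=
      huniq _ ⟨⟨C', hC'top, fun z => rfl⟩, horth'⟩
    have hcc : ∀ k < n + 1 + 1, C' k = C k :=
      mat_coeff_unique (d := n+1) (fun z => by rw [← hP z, ← congrFun hPP' z])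
    rw [← hX'C]
    ext i a
    simp only [Matrix.of_apply]
    rw [hcc a.1 (Nat.lt_succ_of_lt a.1.isLt)]
  · rintro ⟨X, hX, huniq⟩
    set C : ℕ → Matrix (Fin r) (Fin r) ℂ :=
      fun k => if h : k < n + 1 then Matrix.of (fun i p => X i (⟨k, h⟩, p)) else 1 with hCdef
    have hCtop : C (n+1) = 1 := by simp [hCdef]
    have hXC : (Matrix.of fun i (a : Fin (n+1) × Fin r) => C a.1 i a.2) = X := by
      ext i a; simp [hCdef, a.1.isLt, a.1.is_le]
    refine ⟨fun z => ∑ k ∈ Finset.range (n+1+1), z ^ k • C k,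
      ⟨⟨C, hCtop, fun z => rfl⟩,
        (orth_iff C hCtop _ fun z => rfl).mpr (by rw [hXC]; exact hX)⟩, ?_⟩
    rintro P' ⟨⟨C', hC'top, hP'⟩, horth'⟩
    have hXeq : (Matrix.of fun i (a : Fin (n+1) × Fin r) => C' a.1 i a.2) = X :=
      huniq _ ((orth_iff C' hC'top P' hP').mp horth')
    funext z
    rw [hP' z]
    apply Finset.sum_congr rfl
    intro k hk
    congr 1
    by_cases h : k < n + 1
    · ext i p
      have h2 := Matrix.ext_iff.mpr hXeq i ((⟨k, h⟩ : Fin (n+1)), p)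
      simp only [Matrix.of_apply] at h2
      have h3 : C k i p = X i ((⟨k, h⟩ : Fin (n+1)), p) := by simp [hCdef, h, Nat.le_of_lt_succ h]
      rw [h3, ← h2]
    · have hk1 : k = n + 1 := by
        have := Finset.mem_range.mp hk
        omega
      rw [hk1, hC'top, hCtop]

lemma cond_monicR (hr : 1 ≤ r) (hγ : ContDiffOn ℝ 1 γ (Set.Icc 0 1))
    (hW : ContinuousOn W (γ '' Set.Icc 0 1)) :
    (∃! P : ℂ → Matrix (Fin r) (Fin r) ℂ, IsMonicMatPoly r (n+1) P ∧
        ∀ ℓ < n + 1, contourIntegralM γ (fun z => z ^ ℓ • (W z * P z)) = 0) ↔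
    IsUnit (Hm γ W n) := by
  rw [← exU_right hr (Hm γ W n)
      (Matrix.of fun (b : Fin (n+1) × Fin r) i => (-(μm γ W ((b.1 : ℕ) + (n+1)))) b.2 i)]
  have comp : ∀ (C : ℕ → Matrix (Fin r) (Fin r) ℂ), C (n+1) = 1 → ∀ ℓ : ℕ,
      contourIntegralM γ (fun z => z ^ ℓ • (W z * (∑ k ∈ Finset.range (n+1+1), z ^ k • C k)))
        = ∑ k ∈ Finset.range (n+1), μm γ W (ℓ + k) * C k + μm γ W (ℓ + (n+1)) := by
    intro C hC ℓ
    rw [intR hγ hW C (n+1) ℓ, Finset.sum_range_succ, hC, mul_one]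
    rfl
  have orth_iff : ∀ (C : ℕ → Matrix (Fin r) (Fin r) ℂ), C (n+1) = 1 →
      ∀ (P : ℂ → Matrix (Fin r) (Fin r) ℂ),
      (∀ z, P z = ∑ k ∈ Finset.range (n+1+1), z ^ k • C k) →
      ((∀ ℓ < n + 1, contourIntegralM γ (fun z => z ^ ℓ • (W z * P z)) = 0) ↔
        Hm γ W n * (Matrix.of fun (a : Fin (n+1) × Fin r) i => C a.1 a.2 i)
          = Matrix.of fun (b : Fin (n+1) × Fin r) i => (-(μm γ W ((b.1 : ℕ) + (n+1)))) b.2 i) := by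
    intro C hC P hP
    rw [corrR C (fun ℓ => -(μm γ W (ℓ + (n+1))))]
    refine forall₂_congr fun ℓ hℓ => ?_
    have hfun : (fun z => z ^ ℓ • (W z * P z))
        = fun z => z ^ ℓ • (W z * (∑ k ∈ Finset.range (n+1+1), z ^ k • C k)) := by
      funext z; rw [hP z]
    rw [hfun, comp C hC ℓ, add_eq_zero_iff_eq_neg]
  constructor
  · rintro ⟨P, ⟨⟨C, hCtop, hP⟩, horth⟩, huniq⟩
    refine ⟨Matrix.of fun (a : Fin (n+1) × Fin r) i => C a.1 a.2 i,
      (orth_iff C hCtop P hP).mp horth, ?_⟩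
    intro X' hX'
    set C' : ℕ → Matrix (Fin r) (Fin r) ℂ :=
      fun k => if h : k < n + 1 then Matrix.of (fun p i => X' (⟨k, h⟩, p) i) else 1 with hC'
    have hC'top : C' (n+1) = 1 := by simp [hC']
    have hX'C : (Matrix.of fun (a : Fin (n+1) × Fin r) i => C' a.1 a.2 i) = X' := by
      ext a i
      simp [hC', a.1.isLt, a.1.is_le]
    have horth' : ∀ ℓ < n + 1,
        contourIntegralM γ (fun z => z ^ ℓ •
          (W z * (∑ k ∈ Finset.range (n+1+1), z ^ k • C' k))) = 0 :=
      (orth_iff C' hC'top _ fun z => rfl).mpr (by rw [hX'C]; exact hX')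
    have hPP' : (fun z => ∑ k ∈ Finset.range (n+1+1), z ^ k • C' k) = P :=
      huniq _ ⟨⟨C', hC'top, fun z => rfl⟩, horth'⟩
    have hcc : ∀ k < n + 1 + 1, C' k = C k :=
      mat_coeff_unique (d := n+1) (fun z => by rw [← hP z, ← congrFun hPP' z])
    rw [← hX'C]
    ext a i
    simp only [Matrix.of_apply]
    rw [hcc a.1 (Nat.lt_succ_of_lt a.1.isLt)]
  · rintro ⟨X, hX, huniq⟩
    set C : ℕ → Matrix (Fin r) (Fin r) ℂ :=
      fun k => if h : k < n + 1 then Matrix.of (fun p i => X (⟨k, h⟩, p) i) else 1 with hCdef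
    have hCtop : C (n+1) = 1 := by simp [hCdef]
    have hXC : (Matrix.of fun (a : Fin (n+1) × Fin r) i => C a.1 a.2 i) = X := by
      ext a i; simp [hCdef, a.1.isLt, a.1.is_le]
    refine ⟨fun z => ∑ k ∈ Finset.range (n+1+1), z ^ k • C k,
      ⟨⟨C, hCtop, fun z => rfl⟩,
        (orth_iff C hCtop _ fun z => rfl).mpr (by rw [hXC]; exact hX)⟩, ?_⟩
    rintro P' ⟨⟨C', hC'top, hP'⟩, horth'⟩
    have hXeq : (Matrix.of fun (a : Fin (n+1) × Fin r) i => C' a.1 a.2 i) = X :=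
      huniq _ ((orth_iff C' hC'top P' hP').mp horth')
    funext z
    rw [hP' z]
    apply Finset.sum_congr rfl
    intro k hk
    congr 1
    by_cases h : k < n + 1
    · ext p i
      have h2 := Matrix.ext_iff.mpr hXeq ((⟨k, h⟩ : Fin (n+1)), p) i
      simp only [Matrix.of_apply] at h2
      have h3 : C k p i = X ((⟨k, h⟩ : Fin (n+1)), p) i := by simp [hCdef, h, Nat.le_of_lt_succ h]
      rw [h3, ← h2]
    · have hk1 : k = n + 1 := by
        have := Finset.mem_range.mp hk
        omega
      rw [hk1, hC'top, hCtop]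

lemma cond_normL (hr : 1 ≤ r) (hγ : ContDiffOn ℝ 1 γ (Set.Icc 0 1))
    (hW : ContinuousOn W (γ '' Set.Icc 0 1)) :
    (∃! Q : ℂ → Matrix (Fin r) (Fin r) ℂ, IsMatPoly r r n Q ∧
        ∀ ℓ < n + 1, contourIntegralM γ (fun z => z ^ ℓ • (Q z * W z))
          = if ℓ = n then 1 else 0) ↔
    IsUnit (Hm γ W n) := by
  rw [← exU_left hr (Hm γ W n)
      (Matrix.of fun i (b : Fin (n+1) × Fin r) =>
        (if (b.1 : ℕ) = n then (1 : Matrix (Fin r) (Fin r) ℂ) else 0) i b.2)]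
  have orth_iff : ∀ (C : ℕ → Matrix (Fin r) (Fin r) ℂ) (Q : ℂ → Matrix (Fin r) (Fin r) ℂ),
      (∀ z, Q z = ∑ k ∈ Finset.range (n+1), z ^ k • C k) →
      ((∀ ℓ < n + 1, contourIntegralM γ (fun z => z ^ ℓ • (Q z * W z))
          = if ℓ = n then 1 else 0) ↔
        (Matrix.of fun i (a : Fin (n+1) × Fin r) => C a.1 i a.2) * Hm γ W n
          = Matrix.of fun i (b : Fin (n+1) × Fin r) =>
              (if (b.1 : ℕ) = n then (1 : Matrix (Fin r) (Fin r) ℂ) else 0) i b.2) := by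
    intro C Q hQ
    rw [corrL C (fun ℓ => if ℓ = n then 1 else 0)]
    refine forall₂_congr fun ℓ hℓ => ?_
    have hfun : (fun z => z ^ ℓ • (Q z * W z))
        = fun z => z ^ ℓ • ((∑ k ∈ Finset.range (n+1), z ^ k • C k) * W z) := by
      funext z; rw [hQ z]
    have hint : contourIntegralM γ
        (fun z => z ^ ℓ • ((∑ k ∈ Finset.range (n+1), z ^ k • C k) * W z))
        = ∑ k ∈ Finset.range (n+1), C k * μm γ W (ℓ + k) := intL hγ hW C n ℓ
    rw [hfun, hint]
  constructor
  · rintro ⟨Q, ⟨⟨C, hQ⟩, horth⟩, huniq⟩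
    refine ⟨Matrix.of fun i (a : Fin (n+1) × Fin r) => C a.1 i a.2,
      (orth_iff C Q hQ).mp horth, ?_⟩
    intro X' hX'
    set C' : ℕ → Matrix (Fin r) (Fin r) ℂ :=
      fun k => if h : k < n + 1 then Matrix.of (fun i p => X' i (⟨k, h⟩, p)) else 0 with hC'
    have hX'C : (Matrix.of fun i (a : Fin (n+1) × Fin r) => C' a.1 i a.2) = X' := by
      ext i a
      simp [hC', a.1.isLt, a.1.is_le]
    have horth' : ∀ ℓ < n + 1,
        contourIntegralM γ (fun z => z ^ ℓ •
          ((∑ k ∈ Finset.range (n+1), z ^ k • C' k) * W z)) = if ℓ = n then 1 else 0 :=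
      (orth_iff C' _ fun z => rfl).mpr (by rw [hX'C]; exact hX')
    have hQQ' : (fun z => ∑ k ∈ Finset.range (n+1), z ^ k • C' k) = Q :=
      huniq _ ⟨⟨C', fun z => rfl⟩, horth'⟩
    have hcc : ∀ k < n + 1, C' k = C k :=
      mat_coeff_unique (d := n) (fun z => by rw [← hQ z, ← congrFun hQQ' z])
    rw [← hX'C]
    ext i a
    simp only [Matrix.of_apply]
    rw [hcc a.1 a.1.isLt]
  · rintro ⟨X, hX, huniq⟩
    set C : ℕ → Matrix (Fin r) (Fin r) ℂ :=
      fun k => if h : k < n + 1 then Matrix.of (fun i p => X i (⟨k, h⟩, p)) else 0 with hCdef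
    have hXC : (Matrix.of fun i (a : Fin (n+1) × Fin r) => C a.1 i a.2) = X := by
      ext i a; simp [hCdef, a.1.isLt, a.1.is_le]
    refine ⟨fun z => ∑ k ∈ Finset.range (n+1), z ^ k • C k,
      ⟨⟨C, fun z => rfl⟩,
        (orth_iff C _ fun z => rfl).mpr (by rw [hXC]; exact hX)⟩, ?_⟩
    rintro Q' ⟨⟨C', hQ'⟩, horth'⟩
    have hXeq : (Matrix.of fun i (a : Fin (n+1) × Fin r) => C' a.1 i a.2) = X :=
      huniq _ ((orth_iff C' Q' hQ').mp horth')
    funext z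
    rw [hQ' z]
    apply Finset.sum_congr rfl
    intro k hk
    congr 1
    have h : k < n + 1 := Finset.mem_range.mp hk
    ext i p
    have h2 := Matrix.ext_iff.mpr hXeq i ((⟨k, h⟩ : Fin (n+1)), p)
    simp only [Matrix.of_apply] at h2
    have h3 : C k i p = X i ((⟨k, h⟩ : Fin (n+1)), p) := by simp [hCdef, h, Nat.le_of_lt_succ h]
    rw [h3, ← h2]

lemma cond_normR (hr : 1 ≤ r) (hγ : ContDiffOn ℝ 1 γ (Set.Icc 0 1))
    (hW : ContinuousOn W (γ '' Set.Icc 0 1)) :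
    (∃! Q : ℂ → Matrix (Fin r) (Fin r) ℂ, IsMatPoly r r n Q ∧
        ∀ ℓ < n + 1, contourIntegralM γ (fun z => z ^ ℓ • (W z * Q z))
          = if ℓ = n then 1 else 0) ↔
    IsUnit (Hm γ W n) := by
  rw [← exU_right hr (Hm γ W n)
      (Matrix.of fun (b : Fin (n+1) × Fin r) i =>
        (if (b.1 : ℕ) = n then (1 : Matrix (Fin r) (Fin r) ℂ) else 0) b.2 i)]
  have orth_iff : ∀ (C : ℕ → Matrix (Fin r) (Fin r) ℂ) (Q : ℂ → Matrix (Fin r) (Fin r) ℂ),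
      (∀ z, Q z = ∑ k ∈ Finset.range (n+1), z ^ k • C k) →
      ((∀ ℓ < n + 1, contourIntegralM γ (fun z => z ^ ℓ • (W z * Q z))
          = if ℓ = n then 1 else 0) ↔
        Hm γ W n * (Matrix.of fun (a : Fin (n+1) × Fin r) i => C a.1 a.2 i)
          = Matrix.of fun (b : Fin (n+1) × Fin r) i =>
              (if (b.1 : ℕ) = n then (1 : Matrix (Fin r) (Fin r) ℂ) else 0) b.2 i) := by
    intro C Q hQ
    rw [corrR C (fun ℓ => if ℓ = n then 1 else 0)]
    refine forall₂_congr fun ℓ hℓ => ?_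
    have hfun : (fun z => z ^ ℓ • (W z * Q z))
        = fun z => z ^ ℓ • (W z * (∑ k ∈ Finset.range (n+1), z ^ k • C k)) := by
      funext z; rw [hQ z]
    have hint : contourIntegralM γ
        (fun z => z ^ ℓ • (W z * (∑ k ∈ Finset.range (n+1), z ^ k • C k)))
        = ∑ k ∈ Finset.range (n+1), μm γ W (ℓ + k) * C k := intR hγ hW C n ℓ
    rw [hfun, hint]
  constructor
  · rintro ⟨Q, ⟨⟨C, hQ⟩, horth⟩, huniq⟩
    refine ⟨Matrix.of fun (a : Fin (n+1) × Fin r) i => C a.1 a.2 i,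
      (orth_iff C Q hQ).mp horth, ?_⟩
    intro X' hX'
    set C' : ℕ → Matrix (Fin r) (Fin r) ℂ :=
      fun k => if h : k < n + 1 then Matrix.of (fun p i => X' (⟨k, h⟩, p) i) else 0 with hC'
    have hX'C : (Matrix.of fun (a : Fin (n+1) × Fin r) i => C' a.1 a.2 i) = X' := by
      ext a i
      simp [hC', a.1.isLt, a.1.is_le]
    have horth' : ∀ ℓ < n + 1,
        contourIntegralM γ (fun z => z ^ ℓ •
          (W z * (∑ k ∈ Finset.range (n+1), z ^ k • C' k))) = if ℓ = n then 1 else 0 :=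
      (orth_iff C' _ fun z => rfl).mpr (by rw [hX'C]; exact hX')
    have hQQ' : (fun z => ∑ k ∈ Finset.range (n+1), z ^ k • C' k) = Q :=
      huniq _ ⟨⟨C', fun z => rfl⟩, horth'⟩
    have hcc : ∀ k < n + 1, C' k = C k :=
      mat_coeff_unique (d := n) (fun z => by rw [← hQ z, ← congrFun hQQ' z])
    rw [← hX'C]
    ext a i
    simp only [Matrix.of_apply]
    rw [hcc a.1 a.1.isLt]
  · rintro ⟨X, hX, huniq⟩
    set C : ℕ → Matrix (Fin r) (Fin r) ℂ :=
      fun k => if h : k < n + 1 then Matrix.of (fun p i => X (⟨k, h⟩, p) i) else 0 with hCdef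
    have hXC : (Matrix.of fun (a : Fin (n+1) × Fin r) i => C a.1 a.2 i) = X := by
      ext a i; simp [hCdef, a.1.isLt, a.1.is_le]
    refine ⟨fun z => ∑ k ∈ Finset.range (n+1), z ^ k • C k,
      ⟨⟨C, fun z => rfl⟩,
        (orth_iff C _ fun z => rfl).mpr (by rw [hXC]; exact hX)⟩, ?_⟩
    rintro Q' ⟨⟨C', hQ'⟩, horth'⟩
    have hXeq : (Matrix.of fun (a : Fin (n+1) × Fin r) i => C' a.1 a.2 i) = X :=
      huniq _ ((orth_iff C' Q' hQ').mp horth')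
    funext z
    rw [hQ' z]
    apply Finset.sum_congr rfl
    intro k hk
    congr 1
    have h : k < n + 1 := Finset.mem_range.mp hk
    ext p i
    have h2 := Matrix.ext_iff.mpr hXeq ((⟨k, h⟩ : Fin (n+1)), p) i
    simp only [Matrix.of_apply] at h2
    have h3 : C k p i = X ((⟨k, h⟩ : Fin (n+1)), p) i := by simp [hCdef, h, Nat.le_of_lt_succ h]
    rw [h3, ← h2]

end Stmt7Aux

/-- Existence and uniqueness for any one of the four families of matrix
orthogonal polynomials (monic left, monic right, normalized left, normalized right) of a
given degree is equivalent to existence and uniqueness for the other three. -/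
theorem stmt7 (r j : ℕ) (hr : 1 ≤ r) (hj : 1 ≤ j)
    (γ : ℝ → ℂ) (hγ : ContDiffOn ℝ 1 γ (Set.Icc 0 1))
    (W : ℂ → Matrix (Fin r) (Fin r) ℂ) (hW : ContinuousOn W (γ '' Set.Icc 0 1)) :
    ((∃! P : ℂ → Matrix (Fin r) (Fin r) ℂ, IsMonicMatPoly r j P ∧
        ∀ ℓ < j, contourIntegralM γ (fun z => z ^ ℓ • (P z * W z)) = 0) ↔
      (∃! P : ℂ → Matrix (Fin r) (Fin r) ℂ, IsMonicMatPoly r j P ∧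
        ∀ ℓ < j, contourIntegralM γ (fun z => z ^ ℓ • (W z * P z)) = 0)) ∧
    ((∃! P : ℂ → Matrix (Fin r) (Fin r) ℂ, IsMonicMatPoly r j P ∧
        ∀ ℓ < j, contourIntegralM γ (fun z => z ^ ℓ • (W z * P z)) = 0) ↔
      (∃! Q : ℂ → Matrix (Fin r) (Fin r) ℂ, IsMatPoly r r (j - 1) Q ∧
        ∀ ℓ < j, contourIntegralM γ (fun z => z ^ ℓ • (Q z * W z)) =
          if ℓ = j - 1 then 1 else 0)) ∧
    ((∃! Q : ℂ → Matrix (Fin r) (Fin r) ℂ, IsMatPoly r r (j - 1) Q ∧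
        ∀ ℓ < j, contourIntegralM γ (fun z => z ^ ℓ • (Q z * W z)) =
          if ℓ = j - 1 then 1 else 0) ↔
      (∃! Q : ℂ → Matrix (Fin r) (Fin r) ℂ, IsMatPoly r r (j - 1) Q ∧
        ∀ ℓ < j, contourIntegralM γ (fun z => z ^ ℓ • (W z * Q z)) =
          if ℓ = j - 1 then 1 else 0)) := by
  obtain ⟨n, rfl⟩ : ∃ n, j = n + 1 := ⟨j - 1, (Nat.succ_pred_eq_of_pos hj).symm⟩
  simp only [Nat.add_sub_cancel]
  refine ⟨(Stmt7Aux.cond_monicL hr hγ hW).trans (Stmt7Aux.cond_monicR hr hγ hW).symm,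
    (Stmt7Aux.cond_monicR hr hγ hW).trans (Stmt7Aux.cond_normL hr hγ hW).symm,
    (Stmt7Aux.cond_normL hr hγ hW).trans (Stmt7Aux.cond_normR hr hγ hW).symm⟩
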